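/- The only pairs of even integers (k, l) with 4 ≤ k ≤ l such that (k+l)·B_k·B_l / (l·B_k + k·B_l) = B_{k+l} are (k,l) ∈ {(4,4), (4,6), (4,10), (6,8)}, where B_m denotes the m-th Bernoulli number. -/

import Mathlib

open Real

noncomputable def zetv (a : ℕ) : ℝ := ∑' n : ℕ, 1 / (n:ℝ) ^ (2*a)

noncomputable def Lr (a : ℕ) : ℝ := 2 * ((2*a).factorial : ℝ) / (2*π)^(2*a)

lemma zetv_hasSum {a : ℕ} (ha : 1 ≤ a) :
    HasSum (fun n : ℕ => 1/(n:ℝ)^(2*a)) (zetv a) :=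
  (hasSum_zeta_nat (by omega : a ≠ 0)).summable.hasSum

lemma zetv_eq {a : ℕ} (ha : 1 ≤ a) :
    zetv a = (-1:ℝ)^(a+1) * 2^(2*a-1) * π^(2*a) * (bernoulli (2*a) : ℝ) / ((2*a).factorial : ℝ) :=
  (zetv_hasSum ha).unique (hasSum_zeta_nat (by omega))

lemma one_le_zetv {a : ℕ} (ha : 1 ≤ a) : 1 ≤ zetv a := by
  have h := le_hasSum (zetv_hasSum ha) 1 (fun j _ => by positivity)
  simpa using h

lemma zetv_pos {a : ℕ} (ha : 1 ≤ a) : 0 < zetv a := lt_of_lt_of_le one_pos (one_le_zetv ha)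

lemma zetv_le {a : ℕ} (ha : 2 ≤ a) : zetv a ≤ 1.094 := by
  have h2 : HasSum (fun n : ℕ => 1/(n:ℝ)^4) (π^4/90) := by
    simpa using hasSum_zeta_four
  have hle : zetv a ≤ π^4/90 := by
    refine hasSum_le (fun n => ?_) (zetv_hasSum (by omega)) h2
    rcases Nat.eq_zero_or_pos n with rfl | hn
    · simp [zero_pow (show 2*a ≠ 0 by omega)]
    · have h1 : (1:ℝ) ≤ (n:ℝ) := by exact_mod_cast hn
      have := pow_le_pow_right₀ h1 (by omega : 4 ≤ 2*a)
      exact one_div_le_one_div_of_le (by positivity) this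
  have hpi : π ≤ 3.15 := le_of_lt pi_lt_d2
  nlinarith [pi_gt_three, pow_le_pow_left₀ (by positivity : (0:ℝ) ≤ π) hpi 4]

lemma Lr_pos (a : ℕ) : 0 < Lr a := by
  have := pi_gt_three
  have : (0:ℝ) < π := by linarith
  unfold Lr
  positivity

lemma bern_eq {a : ℕ} (ha : 1 ≤ a) :
    ((bernoulli (2*a) : ℚ) : ℝ) = (-1:ℝ)^(a+1) * (zetv a * Lr a) := by
  have hz := zetv_eq ha
  have h2 : (2:ℝ)^(2*a-1) * 2 = 2^(2*a) := by
    rw [← pow_succ]; congr 1; omega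
  have hfac : (((2*a).factorial:ℕ) : ℝ) ≠ 0 := by positivity
  have hpi : (π:ℝ) ≠ 0 := pi_ne_zero
  have hpow : (π:ℝ)^(2*a) ≠ 0 := pow_ne_zero _ hpi
  have hs : ((-1:ℝ)^(a+1)) * ((-1:ℝ)^(a+1)) = 1 := by
    rw [← pow_add]; exact Even.neg_one_pow ⟨a+1, by ring⟩
  rw [hz, Lr, mul_pow]
  have h2p : ((2:ℝ)^(2*a)) ≠ 0 := by positivity
  field_simp
  have hs' : (-1:ℝ)^(a*2) = 1 := Even.neg_one_pow ⟨a, by ring⟩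
  linear_combination (-((bernoulli (2*a):ℚ):ℝ)) * ((-1:ℝ)^(a*2) * h2 + (2:ℝ)^(2*a) * hs')

-- step lemma
lemma fac_step (t G : ℝ) (ht : 0 < t) (a b : ℕ) (hab : a ≤ b) (hb : 3 ≤ b) (F : ℝ) (hF : 0 < F)
    (h : t * b * F * 39.7^(b-a) < G * ((2*b).factorial : ℝ)) :
    t * (b+1) * F * 39.7^(b+1-a) < G * ((2*(b+1)).factorial : ℝ) := by
  have hfac : ((2*(b+1)).factorial : ℝ) = (2*b+2) * ((2*b+1) * ((2*b).factorial : ℝ)) := by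
    have : 2*(b+1) = (2*b+1)+1 := by omega
    rw [this, Nat.factorial_succ, Nat.factorial_succ]
    push_cast; ring
  have hpow : (39.7:ℝ)^(b+1-a) = 39.7^(b-a) * 39.7 := by
    rw [← pow_succ]; congr 1; omega
  have hbr : (3:ℝ) ≤ (b:ℝ) := by exact_mod_cast hb
  have hbpos : (0:ℝ) < (b:ℝ) := by linarith
  have hX : 0 < t * b * F * 39.7^(b-a) := by positivity
  have hY : 0 < G * ((2*b).factorial : ℝ) := lt_trans hX h
  have key : (39.7:ℝ) * (b+1) ≤ b * ((2*b+1)*(2*b+2)) := by nlinarith [sq_nonneg ((b:ℝ)-3), mul_nonneg (sub_nonneg.2 hbr) (sq_nonneg ((b:ℝ)-3))]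
  have main : (t * (b+1) * F * (39.7^(b-a) * 39.7)) * b <
      (G * ((2*b+2) * ((2*b+1) * ((2*b).factorial : ℝ)))) * b := by
    calc (t * (b+1) * F * (39.7^(b-a) * 39.7)) * b
        = (t * b * F * 39.7^(b-a)) * (39.7 * (b+1)) := by ring
      _ < (G * ((2*b).factorial : ℝ)) * (39.7 * (b+1)) := by
          apply mul_lt_mul_of_pos_right h; nlinarith
      _ ≤ (G * ((2*b).factorial : ℝ)) * (b * ((2*b+1)*(2*b+2))) :=
          mul_le_mul_of_nonneg_left key hY.le
      _ = (G * ((2*b+2) * ((2*b+1) * ((2*b).factorial : ℝ)))) * b := by ring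
  rw [hfac, hpow]
  exact lt_of_mul_lt_mul_right main hbpos.le

lemma Mbase : ∀ a : ℕ, 2 ≤ a →
    1.094*((a:ℝ)+4)*((2*a).factorial : ℝ)*39.7^4 < ((2*(a+4)).factorial : ℝ) := by
  intro a ha
  induction a, ha using Nat.le_induction with
  | base => norm_num [Nat.factorial]
  | succ a ha ih =>
    have h1 : ((2*(a+1)).factorial : ℝ) = (2*a+2)*((2*a+1)*((2*a).factorial:ℝ)) := by
      have : 2*(a+1) = (2*a+1)+1 := by omega
      rw [this, Nat.factorial_succ, Nat.factorial_succ]; push_cast; ring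
    have h2 : ((2*(a+1+4)).factorial : ℝ) = (2*a+10)*((2*a+9)*((2*(a+4)).factorial:ℝ)) := by
      have : 2*(a+1+4) = (2*(a+4)+1)+1 := by omega
      rw [this, Nat.factorial_succ, Nat.factorial_succ]; push_cast; ring_nf
    have har : (2:ℝ) ≤ (a:ℝ) := by exact_mod_cast ha
    have hfp : (0:ℝ) < ((2*a).factorial:ℝ) := by positivity
    have hfp4 : (0:ℝ) < ((2*(a+4)).factorial:ℝ) := by positivity
    have key : ((a:ℝ)+5)*((2*a+1)*(2*a+2)) ≤ ((a:ℝ)+4)*((2*a+9)*(2*a+10)) := by nlinarith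
    have main : (1.094*((a:ℝ)+1+4)*((2*a+2)*((2*a+1)*((2*a).factorial:ℝ)))*39.7^4)*((a:ℝ)+4) <
        ((2*a+10)*((2*a+9)*((2*(a+4)).factorial:ℝ)))*((a:ℝ)+4) := by
      calc (1.094*((a:ℝ)+1+4)*((2*a+2)*((2*a+1)*((2*a).factorial:ℝ)))*39.7^4)*((a:ℝ)+4)
          = (1.094*((a:ℝ)+4)*((2*a).factorial:ℝ)*39.7^4) * (((a:ℝ)+5)*((2*a+1)*(2*a+2))) := by ring
        _ < ((2*(a+4)).factorial:ℝ) * (((a:ℝ)+5)*((2*a+1)*(2*a+2))) := by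
            apply mul_lt_mul_of_pos_right ih; nlinarith
        _ ≤ ((2*(a+4)).factorial:ℝ) * (((a:ℝ)+4)*((2*a+9)*(2*a+10))) :=
            mul_le_mul_of_nonneg_left key hfp4.le
        _ = ((2*a+10)*((2*a+9)*((2*(a+4)).factorial:ℝ)))*((a:ℝ)+4) := by ring
    rw [h1, h2]
    push_cast
    have := lt_of_mul_lt_mul_right main (by linarith : (0:ℝ) ≤ (a:ℝ)+4)
    push_cast at this ⊢
    linarith

lemma Mfac : ∀ a : ℕ, 2 ≤ a → ∀ n : ℕ, a+4 ≤ n →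
    1.094*(n:ℝ)*((2*a).factorial : ℝ)*39.7^(n-a) < ((2*n).factorial : ℝ) := by
  intro a ha n hn
  induction n, hn using Nat.le_induction with
  | base =>
    have h4 : a+4-a = 4 := by omega
    have := Mbase a ha
    rw [h4]; push_cast; push_cast at this; linarith
  | succ n hn ih =>
    have step := fac_step 1.094 1 (by norm_num) a n (by omega) (by omega)
      ((2*a).factorial : ℝ) (by positivity) (by rw [one_mul]; exact ih)
    rw [one_mul] at step
    push_cast at step ⊢
    linarith

lemma C2fac : ∀ a b : ℕ, 2 ≤ a → a < b → 8 ≤ a + b →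
    1.094*(b:ℝ)*((2*a).factorial : ℝ)*39.7^(b-a) < (a:ℝ)*((2*b).factorial : ℝ) := by
  intro a b ha hab hn
  rcases Nat.lt_or_ge a 4 with h4 | h4
  · interval_cases a
    · -- a = 2, b ≥ 6
      have hb : 6 ≤ b := by omega
      clear hab hn
      induction b, hb using Nat.le_induction with
      | base => norm_num [Nat.factorial]
      | succ b hb ih => 
        have step := fac_step 1.094 2 (by norm_num) 2 b (by omega) (by omega)
          ((2*2).factorial : ℝ) (by positivity) (by push_cast at ih ⊢; linarith)
        push_cast at step ⊢; linarith
    · -- a = 3, b ≥ 5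
      have hb : 5 ≤ b := by omega
      clear hab hn
      induction b, hb using Nat.le_induction with
      | base => norm_num [Nat.factorial]
      | succ b hb ih =>
        have step := fac_step 1.094 3 (by norm_num) 3 b (by omega) (by omega)
          ((2*3).factorial : ℝ) (by positivity) (by push_cast at ih ⊢; linarith)
        push_cast at step ⊢; linarith
  · -- a ≥ 4, b ≥ a+1
    have hb : a + 1 ≤ b := hab
    clear hn hab
    induction b, hb using Nat.le_induction with
    | base =>
      have h1 : ((2*(a+1)).factorial : ℝ) = (2*a+2)*((2*a+1)*((2*a).factorial:ℝ)) := by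
        have : 2*(a+1) = (2*a+1)+1 := by omega
        rw [this, Nat.factorial_succ, Nat.factorial_succ]; push_cast; ring
      have har : (4:ℝ) ≤ (a:ℝ) := by exact_mod_cast h4
      have hfp : (0:ℝ) < ((2*a).factorial:ℝ) := by positivity
      have hsub : a + 1 - a = 1 := by omega
      rw [h1, hsub, pow_one]
      push_cast
      have key : (1.094:ℝ)*39.7*((a:ℝ)+1) < (a:ℝ)*((2*a+1)*(2*a+2)) := by
        nlinarith [sub_nonneg.2 har, mul_nonneg (sub_nonneg.2 har) (sub_nonneg.2 har),
          mul_nonneg (mul_nonneg (sub_nonneg.2 har) (sub_nonneg.2 har)) (sub_nonneg.2 har)]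
      nlinarith [mul_lt_mul_of_pos_right key hfp]
    | succ b hb ih =>
      have step := fac_step 1.094 (a:ℝ) (by norm_num) a b (by omega) (by omega)
        ((2*a).factorial : ℝ) (by positivity) (by push_cast at ih ⊢; linarith)
      push_cast at step ⊢; linarith

lemma C3fac : ∀ a b : ℕ, (a = 3 ∧ 6 ≤ b) ∨ (5 ≤ a ∧ a + 1 ≤ b) →
    2*1.094*(b:ℝ)*((2*a).factorial : ℝ)*39.7^(b-a) < (a:ℝ)*((2*b).factorial : ℝ) := by
  intro a b hcase
  rcases hcase with ⟨rfl, hb⟩ | ⟨ha, hb⟩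
  · induction b, hb using Nat.le_induction with
    | base => norm_num [Nat.factorial]
    | succ b hb ih =>
      have step := fac_step (2*1.094) 3 (by norm_num) 3 b (by omega) (by omega)
        ((2*3).factorial : ℝ) (by positivity) (by push_cast at ih ⊢; linarith)
      push_cast at step ⊢; linarith
  · induction b, hb using Nat.le_induction with
    | base =>
      have h1 : ((2*(a+1)).factorial : ℝ) = (2*a+2)*((2*a+1)*((2*a).factorial:ℝ)) := by
        have : 2*(a+1) = (2*a+1)+1 := by omega
        rw [this, Nat.factorial_succ, Nat.factorial_succ]; push_cast; ring
      have har : (5:ℝ) ≤ (a:ℝ) := by exact_mod_cast ha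
      have hfp : (0:ℝ) < ((2*a).factorial:ℝ) := by positivity
      have hsub : a + 1 - a = 1 := by omega
      rw [h1, hsub, pow_one]
      push_cast
      have key : (2:ℝ)*1.094*39.7*((a:ℝ)+1) < (a:ℝ)*((2*a+1)*(2*a+2)) := by
        nlinarith [sub_nonneg.2 har, mul_nonneg (sub_nonneg.2 har) (sub_nonneg.2 har),
          mul_nonneg (mul_nonneg (sub_nonneg.2 har) (sub_nonneg.2 har)) (sub_nonneg.2 har)]
      nlinarith [mul_lt_mul_of_pos_right key hfp]
    | succ b hb ih =>
      have step := fac_step (2*1.094) (a:ℝ) (by norm_num) a b (by omega) (by omega)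
        ((2*a).factorial : ℝ) (by positivity) (by push_cast at ih ⊢; linarith)
      push_cast at step ⊢; linarith

lemma bridge (a b : ℕ) (ha : 1 ≤ a) (hab : a ≤ b) (t G : ℝ) (ht : 0 < t) (hG : 0 < G)
    (h : t * ((2*a).factorial : ℝ) * 39.7^(b-a) < G * ((2*b).factorial : ℝ)) :
    t * Lr a < G * Lr b := by
  have hpi : (0:ℝ) < π := pi_pos
  have h2p : (0:ℝ) < (2*π) := by linarith
  have hsplit : (2*π)^(2*b) = (2*π)^(2*a) * ((2*π)^2)^(b-a) := by
    rw [← pow_mul, ← pow_add]; congr 1; omega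
  have hc : ((2*π)^2 : ℝ) ≤ 39.7 := by nlinarith [pi_lt_d2.le, hpi]
  have hcpow : (((2*π)^2)^(b-a) : ℝ) ≤ 39.7^(b-a) :=
    pow_le_pow_left₀ (by positivity) hc _
  have hFa : (0:ℝ) < ((2*a).factorial : ℝ) := by positivity
  have hFb : (0:ℝ) < ((2*b).factorial : ℝ) := by positivity
  rw [Lr, Lr]
  rw [show t * (2*((2*a).factorial:ℝ)/(2*π)^(2*a)) = (t*2*((2*a).factorial:ℝ))/((2*π)^(2*a)) by ring,
      show G * (2*((2*b).factorial:ℝ)/(2*π)^(2*b)) = (G*2*((2*b).factorial:ℝ))/((2*π)^(2*b)) by ring]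
  rw [div_lt_div_iff₀ (by positivity) (by positivity), hsplit]
  have hp2a : (0:ℝ) < (2*π)^(2*a) := by positivity
  nlinarith [mul_lt_mul_of_pos_right h (show (0:ℝ) < 2*(2*π)^(2*a) by positivity),
    mul_le_mul_of_nonneg_right hcpow (show (0:ℝ) ≤ t*((2*a).factorial:ℝ)*(2*(2*π)^(2*a)) by positivity)]

lemma C1beta {a n : ℕ} (ha : 2 ≤ a) (hn : a + 4 ≤ n) :
    (n:ℝ) * (zetv a * Lr a) < zetv n * Lr n := by
  have hM := Mfac a ha n hn
  have hnr0 : (6:ℝ) ≤ (n:ℝ) := by exact_mod_cast le_trans (by omega : 6 ≤ a+4) hn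
  have hbr := bridge a n (by omega) (by omega) (1.094*(n:ℝ)) 1 (by nlinarith) one_pos
    (by rw [one_mul]; exact hM)
  have h1 : zetv a ≤ 1.094 := zetv_le ha
  have h2 : 1 ≤ zetv n := one_le_zetv (by omega)
  have hLa := Lr_pos a
  have hLn := Lr_pos n
  have hnr : (6:ℝ) ≤ (n:ℝ) := by exact_mod_cast le_trans (by omega : 6 ≤ a+4) hn
  rw [one_mul] at hbr
  nlinarith [mul_le_mul_of_nonneg_right (mul_le_mul_of_nonneg_left h1 (by linarith : (0:ℝ) ≤ (n:ℝ))) hLa.le,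
    mul_le_mul_of_nonneg_right h2 hLn.le]

lemma C2beta {a b : ℕ} (ha : 2 ≤ a) (hab : a < b) (hn : 8 ≤ a + b) :
    (b:ℝ) * (zetv a * Lr a) < (a:ℝ) * (zetv b * Lr b) := by
  have hM := C2fac a b ha hab hn
  have hbr0 : (3:ℝ) ≤ (b:ℝ) := by exact_mod_cast (by omega : 3 ≤ b)
  have har0 : (2:ℝ) ≤ (a:ℝ) := by exact_mod_cast ha
  have hbr := bridge a b (by omega) (by omega) (1.094*(b:ℝ)) (a:ℝ) (by nlinarith) (by linarith) hM
  have h1 : zetv a ≤ 1.094 := zetv_le ha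
  have h2 : 1 ≤ zetv b := one_le_zetv (by omega)
  have hLa := Lr_pos a
  have hLb := Lr_pos b
  nlinarith [mul_le_mul_of_nonneg_right (mul_le_mul_of_nonneg_left h1 (by linarith : (0:ℝ) ≤ (b:ℝ))) hLa.le,
    mul_le_mul_of_nonneg_right h2 (mul_nonneg (by linarith : (0:ℝ) ≤ (a:ℝ)) hLb.le)]

lemma C3beta {a b : ℕ} (hcase : (a = 3 ∧ 6 ≤ b) ∨ (5 ≤ a ∧ a + 1 ≤ b)) :
    2 * (b:ℝ) * (zetv a * Lr a) < (a:ℝ) * (zetv b * Lr b) := by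
  have hM := C3fac a b hcase
  have ha : 2 ≤ a := by rcases hcase with ⟨rfl, _⟩ | ⟨h, _⟩ <;> omega
  have hb : 4 ≤ b := by rcases hcase with ⟨rfl, h⟩ | ⟨h1, h2⟩ <;> omega
  have hab : a ≤ b := by rcases hcase with ⟨rfl, h⟩ | ⟨h1, h2⟩ <;> omega
  have hbr0 : (4:ℝ) ≤ (b:ℝ) := by exact_mod_cast hb
  have har0 : (2:ℝ) ≤ (a:ℝ) := by exact_mod_cast ha
  have hbr := bridge a b (by omega) hab (2*1.094*(b:ℝ)) (a:ℝ) (by nlinarith) (by linarith) hM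
  have h1 : zetv a ≤ 1.094 := zetv_le ha
  have h2 : 1 ≤ zetv b := one_le_zetv (by omega)
  have hLa := Lr_pos a
  have hLb := Lr_pos b
  nlinarith [mul_le_mul_of_nonneg_right (mul_le_mul_of_nonneg_left h1 (by linarith : (0:ℝ) ≤ 2*(b:ℝ))) hLa.le,
    mul_le_mul_of_nonneg_right h2 (mul_nonneg (by linarith : (0:ℝ) ≤ (a:ℝ)) hLb.le)]

lemma sgn_even {m : ℕ} (h : Even m) : (-1:ℝ)^(m+1) = -1 :=
  Odd.neg_one_pow (Even.add_one h)

lemma sgn_odd {m : ℕ} (h : Odd m) : (-1:ℝ)^(m+1) = 1 :=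
  Even.neg_one_pow (Odd.add_one h)

lemma main_ineq (a b : ℕ) (ha : 2 ≤ a) (hab : a ≤ b) (hn : 8 ≤ a + b) :
    (2*(a:ℚ) + 2*(b:ℚ)) * bernoulli (2*a) * bernoulli (2*b) ≠
      bernoulli (2*(a+b)) * (2*(b:ℚ) * bernoulli (2*a) + 2*(a:ℚ) * bernoulli (2*b)) := by
  intro h
  have hR : (2*(a:ℝ) + 2*(b:ℝ)) * ((bernoulli (2*a):ℚ):ℝ) * ((bernoulli (2*b):ℚ):ℝ) =
      ((bernoulli (2*(a+b)):ℚ):ℝ) *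
        (2*(b:ℝ) * ((bernoulli (2*a):ℚ):ℝ) + 2*(a:ℝ) * ((bernoulli (2*b):ℚ):ℝ)) := by
    exact_mod_cast congrArg (fun q : ℚ => (q:ℝ)) h
  rw [bern_eq (a := a) (by omega), bern_eq (a := b) (by omega),
    bern_eq (a := a+b) (by omega)] at hR
  have hb4 : 4 ≤ b := by omega
  have hA : 0 < zetv a * Lr a := mul_pos (zetv_pos (by omega)) (Lr_pos a)
  have hB : 0 < zetv b * Lr b := mul_pos (zetv_pos (by omega)) (Lr_pos b)
  have hN : 0 < zetv (a+b) * Lr (a+b) := mul_pos (zetv_pos (by omega)) (Lr_pos (a+b))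
  set A := zetv a * Lr a with hAdef
  set B := zetv b * Lr b with hBdef
  set N := zetv (a+b) * Lr (a+b) with hNdef
  have har : (2:ℝ) ≤ (a:ℝ) := by exact_mod_cast ha
  have hbr : (4:ℝ) ≤ (b:ℝ) := by exact_mod_cast hb4
  have hC1 : ((a:ℝ)+(b:ℝ)) * A < N := by
    have := C1beta (a := a) (n := a+b) ha (by omega)
    push_cast at this
    exact this
  rcases Nat.even_or_odd a with hae | hao <;> rcases Nat.even_or_odd b with hbe | hbo
  · -- even, even
    rw [sgn_even hae, sgn_even hbe, sgn_even (hae.add hbe)] at hR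
    nlinarith [hR, hC1, har, hbr, mul_pos hA hB, mul_pos hN hA, mul_pos hN hB,
      mul_lt_mul_of_pos_right hC1 (mul_pos (lt_of_lt_of_le two_pos har) hB),
      mul_pos (mul_pos hA hB) (show (0:ℝ) < (a:ℝ)+(b:ℝ) by linarith)]
  · -- even, odd
    rw [sgn_even hae, sgn_odd hbo, sgn_odd (Even.add_odd hae hbo)] at hR
    have hC2 : (b:ℝ) * A < (a:ℝ) * B := C2beta ha (by
      obtain ⟨c, hc⟩ := hae; obtain ⟨d, hd⟩ := hbo; omega) hn
    nlinarith [hR, hC2, mul_pos hA hB, mul_lt_mul_of_pos_left hC2 (mul_pos two_pos hN),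
      mul_pos (mul_pos hA hB) (show (0:ℝ) < (a:ℝ)+(b:ℝ) by linarith)]
  · -- odd, even
    rw [sgn_odd hao, sgn_even hbe, sgn_odd (Odd.add_even hao hbe)] at hR
    have har3 : (3:ℝ) ≤ (a:ℝ) := by
      obtain ⟨c, hc⟩ := hao; exact_mod_cast (by omega : 3 ≤ a)
    have hC3 : 2*(b:ℝ) * A < (a:ℝ) * B := C3beta (by
      obtain ⟨c, hc⟩ := hao; obtain ⟨d, hd⟩ := hbe; omega)
    nlinarith [hR, hC3, hC1, har3, mul_pos hA hB,
      mul_lt_mul_of_pos_left hC3 hN,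
      mul_lt_mul_of_pos_right hC1 (mul_pos (lt_of_lt_of_le three_pos har3) hB),
      mul_pos (mul_pos hA hB) (show (0:ℝ) < (a:ℝ)+(b:ℝ) by linarith)]
  · -- odd, odd
    rw [sgn_odd hao, sgn_odd hbo, sgn_even (Odd.add_odd hao hbo)] at hR
    nlinarith [hR, mul_pos hA hB, mul_pos hN hA, mul_pos hN hB, har, hbr,
      mul_pos (mul_pos hA hB) (show (0:ℝ) < (a:ℝ)+(b:ℝ) by linarith)]
lemma bo5 : bernoulli' 5 = 0 := bernoulli'_eq_zero_of_odd ⟨2, by norm_num⟩ (by norm_num)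
lemma bo7 : bernoulli' 7 = 0 := bernoulli'_eq_zero_of_odd ⟨3, by norm_num⟩ (by norm_num)
lemma bo9 : bernoulli' 9 = 0 := bernoulli'_eq_zero_of_odd ⟨4, by norm_num⟩ (by norm_num)
lemma bo11 : bernoulli' 11 = 0 := bernoulli'_eq_zero_of_odd ⟨5, by norm_num⟩ (by norm_num)
lemma bo13 : bernoulli' 13 = 0 := bernoulli'_eq_zero_of_odd ⟨6, by norm_num⟩ (by norm_num)

lemma b'6 : bernoulli' 6 = 1/42 := by
  have h := sum_bernoulli' 7
  simp [Finset.sum_range_succ, bernoulli'_zero, bernoulli'_one, bernoulli'_two, bernoulli'_three,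
    bernoulli'_four, bo5, Nat.choose] at h
  linarith

lemma b'8 : bernoulli' 8 = -1/30 := by
  have h := sum_bernoulli' 9
  simp [Finset.sum_range_succ, bernoulli'_zero, bernoulli'_one, bernoulli'_two, bernoulli'_three,
    bernoulli'_four, bo5, b'6, bo7, Nat.choose] at h
  linarith

lemma b'10 : bernoulli' 10 = 5/66 := by
  have h := sum_bernoulli' 11
  simp [Finset.sum_range_succ, bernoulli'_zero, bernoulli'_one, bernoulli'_two, bernoulli'_three,
    bernoulli'_four, bo5, b'6, bo7, b'8, bo9, Nat.choose] at h
  linarith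

lemma b'12 : bernoulli' 12 = -691/2730 := by
  have h := sum_bernoulli' 13
  simp [Finset.sum_range_succ, bernoulli'_zero, bernoulli'_one, bernoulli'_two, bernoulli'_three,
    bernoulli'_four, bo5, b'6, bo7, b'8, bo9, b'10, bo11, Nat.choose] at h
  linarith

lemma b'14 : bernoulli' 14 = 7/6 := by
  have h := sum_bernoulli' 15
  simp [Finset.sum_range_succ, bernoulli'_zero, bernoulli'_one, bernoulli'_two, bernoulli'_three,
    bernoulli'_four, bo5, b'6, bo7, b'8, bo9, b'10, bo11, b'12, bo13, Nat.choose] at h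
  linarith

lemma bern4 : bernoulli 4 = -1/30 := by
  rw [bernoulli_eq_bernoulli'_of_ne_one (by norm_num), bernoulli'_four]
lemma bern6 : bernoulli 6 = 1/42 := by
  rw [bernoulli_eq_bernoulli'_of_ne_one (by norm_num), b'6]
lemma bern8 : bernoulli 8 = -1/30 := by
  rw [bernoulli_eq_bernoulli'_of_ne_one (by norm_num), b'8]
lemma bern10 : bernoulli 10 = 5/66 := by
  rw [bernoulli_eq_bernoulli'_of_ne_one (by norm_num), b'10]
lemma bern12 : bernoulli 12 = -691/2730 := by
  rw [bernoulli_eq_bernoulli'_of_ne_one (by norm_num), b'12]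
lemma bern14 : bernoulli 14 = 7/6 := by
  rw [bernoulli_eq_bernoulli'_of_ne_one (by norm_num), b'14]

lemma bern_ne_zero {m : ℕ} (hm : 1 ≤ m) : bernoulli (2*m) ≠ 0 := by
  intro h0
  have hR : ((bernoulli (2*m) : ℚ) : ℝ) = 0 := by exact_mod_cast congrArg (fun q : ℚ => (q:ℝ)) h0
  rw [bern_eq hm] at hR
  have hpos : 0 < zetv m * Lr m := mul_pos (zetv_pos hm) (Lr_pos m)
  rcases Nat.even_or_odd m with he | ho
  · rw [sgn_even he] at hR; linarith
  · rw [sgn_odd ho] at hR; linarith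

/-- The only pairs of even integers `(k, l)` with `4 ≤ k ≤ l` satisfying
`(k+l) B_k B_l / (l B_k + k B_l) = B_{k+l}` are `(4,4), (4,6), (4,10), (6,8)`. -/
theorem bernoulli_constant_term_condition (k l : ℕ) (hke : Even k) (hle : Even l)
    (hk : 4 ≤ k) (hkl : k ≤ l) :
    ((k + l : ℚ) * bernoulli k * bernoulli l /
        ((l : ℚ) * bernoulli k + (k : ℚ) * bernoulli l) = bernoulli (k + l)) ↔
      (k, l) ∈ ({(4, 4), (4, 6), (4, 10), (6, 8)} : Set (ℕ × ℕ)) := by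
  obtain ⟨a, rfl⟩ := hke
  obtain ⟨b, rfl⟩ := hle
  have ha2 : 2 ≤ a := by omega
  have hab : a ≤ b := by omega
  rcases le_or_gt 8 (a+b) with h8 | h8
  · constructor
    · intro hEq
      exfalso
      by_cases hd : ((b+b : ℕ):ℚ) * bernoulli (a+a) + ((a+a : ℕ):ℚ) * bernoulli (b+b) = 0
      · rw [hd, div_zero] at hEq
        refine bern_ne_zero (m := a+b) (by omega) ?_
        rw [show 2*(a+b) = a+a+(b+b) by ring]
        exact hEq.symm
      · have hcross := (div_eq_iff hd).mp hEq
        apply main_ineq a b ha2 hab h8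
        rw [show 2*a = a+a by ring, show 2*b = b+b by ring, show 2*(a+b) = a+a+(b+b) by ring]
        push_cast at hcross ⊢
        linarith [hcross]
    · intro hmem
      exfalso
      simp only [Set.mem_insert_iff, Set.mem_singleton_iff, Prod.mk.injEq] at hmem
      rcases hmem with ⟨h1,h2⟩|⟨h1,h2⟩|⟨h1,h2⟩|⟨h1,h2⟩ <;> omega
  · have hb5 : b ≤ 5 := by omega
    have ha3 : a ≤ 3 := by omega
    interval_cases a <;> interval_cases b <;>
      first
      | omega
      | norm_num [bern4, bern6, bern8, bern10, bern12, bern14,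
        Set.mem_insert_iff, Set.mem_singleton_iff, Prod.mk.injEq]
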